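/- Let $A$ be a random matrix in $\mathbb{R}^{n \times n}$ with i.i.d. standard Gaussian entries, and let $g : \mathbb{R}^{n \times n} \to \mathbb{R}$ be a measurable function such that $||\mathrm{Per}(A)|^2 - g(A)| \leq \varepsilon$ holds with probability at least $1 - \delta$. Let $B$ be an arbitrary fixed matrix with entries bounded in absolute value by $1$, and let $t \in \mathbb{R}$. Then $||\mathrm{Per}(A + tB)|^2 - g(A + tB)| \leq \varepsilon$ holds with probability at least $1 - e^{\|tB\|^2/2}\, \delta^{1/2}$, where $\|\cdot\|$ is the Hilbert-Schmidt (Frobenius) norm. -/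

import Mathlib

open Real MeasureTheory
open scoped ENNReal NNReal

/-- The permanent of an `n × n` real matrix (given as a function `Fin n → Fin n → ℝ`). -/
noncomputable def matPerm (n : ℕ) (A : Fin n → Fin n → ℝ) : ℝ :=
  ∑ σ : Equiv.Perm (Fin n), ∏ i, A i (σ i)

/-- The standard Gaussian probability measure on `n × n` real matrices, viewed as `ℝ^{n²}`. -/
noncomputable def matrixGaussian (n : ℕ) : Measure (Fin n → Fin n → ℝ) :=
  (volume : Measure (Fin n → Fin n → ℝ)).withDensity fun A =>
    ENNReal.ofReal ((2 * Real.pi) ^ (-((n : ℝ) ^ 2) / 2) *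
      Real.exp (-(∑ i, ∑ j, (A i j) ^ 2) / 2))

noncomputable def psi (s : ℝ) : ℝ := (2 * Real.pi) ^ (-(1:ℝ)/2) * Real.exp (-s ^ 2 / 2)

lemma psi_pos (s : ℝ) : 0 < psi s :=
  mul_pos (Real.rpow_pos_of_pos (by positivity) _) (Real.exp_pos _)

lemma psi_integrable : Integrable psi := by
  apply Integrable.const_mul
  have := integrable_exp_neg_mul_sq (b := (1/2 : ℝ)) (by norm_num)
  convert this using 2 with x
  ring_nf

lemma psi_integral : ∫ s, psi s = 1 := by
  unfold psi
  rw [integral_const_mul]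
  have h : ∫ s : ℝ, Real.exp (-s ^ 2 / 2) = Real.sqrt (2 * Real.pi) := by
    have := integral_gaussian (1/2 : ℝ)
    rw [show (π / (1/2)) = 2 * π by ring] at this
    rw [← this]
    congr 1 with x
    ring_nf
  rw [h, Real.sqrt_eq_rpow, ← Real.rpow_add (by positivity)]
  norm_num

noncomputable def phi (n : ℕ) (A : Fin n → Fin n → ℝ) : ℝ :=
  (2 * Real.pi) ^ (-((n : ℝ) ^ 2) / 2) * Real.exp (-(∑ i, ∑ j, (A i j) ^ 2) / 2)

lemma phi_pos (n : ℕ) (A : Fin n → Fin n → ℝ) : 0 < phi n A :=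
  mul_pos (Real.rpow_pos_of_pos (by positivity) _) (Real.exp_pos _)

lemma phi_measurable (n : ℕ) : Measurable (phi n) := by
  unfold phi
  apply Measurable.const_mul
  apply Real.measurable_exp.comp
  apply Measurable.div_const
  apply Measurable.neg
  apply Finset.measurable_sum
  intro i _
  apply Finset.measurable_sum
  intro j _
  exact ((measurable_pi_apply j).comp (measurable_pi_apply i)).pow_const 2

lemma phi_eq_prod (n : ℕ) (A : Fin n → Fin n → ℝ) :
    phi n A = ∏ i, ∏ j, psi (A i j) := by
  unfold phi psi
  simp only [Finset.prod_mul_distrib, Finset.prod_const, Finset.card_univ, Fintype.card_fin,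
    ← Real.exp_sum]
  congr 1
  · rw [← pow_mul, ← Real.rpow_natCast ((2*π) ^ (-(1:ℝ)/2)), ← Real.rpow_mul (by positivity)]
    congr 1
    push_cast
    ring
  · congr 1
    simp [Finset.sum_div, neg_div, Finset.sum_neg_distrib]

set_option maxHeartbeats 1000000 in
lemma phi_integrable (n : ℕ) : Integrable (phi n) := by
  have h1 : Integrable (fun y : Fin n → ℝ => ∏ j, psi (y j)) :=
    Integrable.fintype_prod (f := fun _ => psi) fun _ => psi_integrable
  have h2 : Integrable (fun A : Fin n → Fin n → ℝ =>
      ∏ i, (fun _ (y : Fin n → ℝ) => ∏ j, psi (y j)) i (A i)) :=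
    Integrable.fintype_prod (f := fun _ (y : Fin n → ℝ) => ∏ j, psi (y j)) fun _ => h1
  exact h2.congr (ae_of_all _ fun A => (phi_eq_prod n A).symm)

lemma phi_integral (n : ℕ) : ∫ A, phi n A = 1 := by
  simp_rw [phi_eq_prod]
  rw [volume_pi, MeasureTheory.integral_fintype_prod_eq_prod (ι := Fin n)
    (f := fun _ (y : Fin n → ℝ) => ∏ j, psi (y j))]
  simp [volume_pi, MeasureTheory.integral_fintype_prod_eq_pow (ι := Fin n) psi, psi_integral]

lemma phi_lintegral (n : ℕ) : ∫⁻ A, ENNReal.ofReal (phi n A) = 1 := by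
  rw [← MeasureTheory.ofReal_integral_eq_lintegral_ofReal (phi_integrable n)
    (ae_of_all _ fun A => (phi_pos n A).le), phi_integral]
  simp

lemma exp_algebra (c S1 S2 S3 S4 : ℝ) (hc : 0 < c) (hS : S3 = 2*S1 - S2 + 2*S4) :
    (c * Real.exp (-S1/2))^2 / (c * Real.exp (-S2/2)) = Real.exp S4 * (c * Real.exp (-S3/2)) := by
  subst hS
  rw [div_eq_iff (by positivity), mul_pow, sq (Real.exp _), ← Real.exp_add]
  rw [show Real.exp S4 * (c * Real.exp (-(2 * S1 - S2 + 2 * S4) / 2)) * (c * Real.exp (-S2 / 2))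
      = c^2 * (Real.exp S4 * Real.exp (-(2 * S1 - S2 + 2 * S4) / 2) * Real.exp (-S2 / 2)) by ring]
  rw [← Real.exp_add, ← Real.exp_add]
  congr 1
  ring_nf

lemma phi_div_identity (n : ℕ) (C y : Fin n → Fin n → ℝ) :
    phi n (y - C) ^ 2 / phi n y
      = Real.exp (∑ i, ∑ j, (C i j)^2) * phi n (y - (C + C)) := by
  unfold phi
  apply exp_algebra _ _ _ _ _ (by positivity)
  simp only [Pi.sub_apply, Pi.add_apply]
  rw [Finset.mul_sum, Finset.mul_sum, ← Finset.sum_sub_distrib, ← Finset.sum_add_distrib]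
  refine Finset.sum_congr rfl fun i _ => ?_
  rw [Finset.mul_sum, Finset.mul_sum, ← Finset.sum_sub_distrib, ← Finset.sum_add_distrib]
  refine Finset.sum_congr rfl fun j _ => ?_
  ring

lemma lintegral_phi_shift (n : ℕ) (C : Fin n → Fin n → ℝ) :
    ∫⁻ y, ENNReal.ofReal (phi n (y - C)) = 1 := by
  have := lintegral_add_right_eq_self (μ := (volume : Measure (Fin n → Fin n → ℝ)))
    (fun y => ENNReal.ofReal (phi n (y - C))) C
  simp only [add_sub_cancel_right] at this
  rw [← this]
  exact phi_lintegral n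

set_option maxHeartbeats 2000000 in
theorem rare_events_lemma_I
    (n : ℕ) (g : (Fin n → Fin n → ℝ) → ℝ) (hg : Measurable g)
    (ε δ : ℝ) (hε : 0 ≤ ε) (hδ : 0 ≤ δ)
    (hgood : ENNReal.ofReal (1 - δ) ≤
      matrixGaussian n {A | |(|matPerm n A| ^ 2 - g A)| ≤ ε})
    (B : Fin n → Fin n → ℝ) (hB : ∀ i j, |B i j| ≤ 1) (t : ℝ) :
    ENNReal.ofReal (1 - Real.exp ((∑ i, ∑ j, (t * B i j) ^ 2) / 2) * Real.sqrt δ) ≤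
      matrixGaussian n {A | |(|matPerm n (fun i j => A i j + t * B i j)| ^ 2 -
        g (fun i j => A i j + t * B i j))| ≤ ε} := by
  classical
  set C : Fin n → Fin n → ℝ := fun i j => t * B i j with hCdef
  set K : ℝ := Real.exp ((∑ i, ∑ j, (C i j) ^ 2) / 2) with hKdef
  have hK0 : 0 ≤ K * Real.sqrt δ := mul_nonneg (Real.exp_pos _).le (Real.sqrt_nonneg _)
  -- measurability of the permanent and the good set
  have hper : Measurable (matPerm n) := by
    unfold matPerm
    apply Finset.measurable_sum
    intro σ _
    apply Finset.measurable_prod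
    intro i _
    exact (measurable_pi_apply (σ i)).comp (measurable_pi_apply i)
  have herr : Measurable fun A : Fin n → Fin n → ℝ => |(|matPerm n A| ^ 2 - g A)| :=
    ((hper.abs.pow_const 2).sub hg).abs
  set S : Set (Fin n → Fin n → ℝ) := {A | |(|matPerm n A| ^ 2 - g A)| ≤ ε} with hSdef
  have hS : MeasurableSet S := measurableSet_le herr measurable_const
  set μ := matrixGaussian n with hμdef
  have happly : ∀ s : Set (Fin n → Fin n → ℝ), MeasurableSet s →
      μ s = ∫⁻ y in s, ENNReal.ofReal (phi n y) := by
    intro s hs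
    rw [hμdef, matrixGaussian, withDensity_apply _ hs]
    rfl
  have hμuniv : μ Set.univ = 1 := by
    rw [happly _ MeasurableSet.univ, Measure.restrict_univ, phi_lintegral]
  -- bound on the bad set
  have hbadS : μ Sᶜ ≤ ENNReal.ofReal δ := by
    have hfin : μ S ≠ ⊤ := ((measure_mono (Set.subset_univ S)).trans_lt
      (by rw [hμuniv]; exact ENNReal.one_lt_top)).ne
    have h1 : μ Sᶜ = 1 - μ S := by
      rw [measure_compl hS hfin, hμuniv]
    have h2 : (1 : ℝ≥0∞) ≤ ENNReal.ofReal δ + ENNReal.ofReal (1 - δ) := by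
      rcases le_total 1 δ with h | h
      · calc (1:ℝ≥0∞) = ENNReal.ofReal 1 := by simp
          _ ≤ ENNReal.ofReal δ := ENNReal.ofReal_le_ofReal h
          _ ≤ _ := le_self_add
      · rw [← ENNReal.ofReal_add hδ (by linarith)]
        simp
    rw [h1]
    calc (1:ℝ≥0∞) - μ S ≤ 1 - ENNReal.ofReal (1 - δ) := tsub_le_tsub_left hgood 1
      _ ≤ ENNReal.ofReal δ := tsub_le_iff_right.mpr h2
  -- rewrite the target measure by translation invariance
  have htarget : {A | |(|matPerm n (fun i j => A i j + t * B i j)| ^ 2 -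
        g (fun i j => A i j + t * B i j))| ≤ ε} = (fun A => A + C) ⁻¹' S := rfl
  have hS' : MeasurableSet ((fun A => A + C) ⁻¹' S) := (measurable_add_const C) hS
  have hshift : μ ((fun A => A + C) ⁻¹' S) = ∫⁻ y in S, ENNReal.ofReal (phi n (y - C)) := by
    rw [happly _ hS']
    rw [← lintegral_indicator hS' _, ← lintegral_indicator hS _]
    have := lintegral_add_right_eq_self (μ := (volume : Measure (Fin n → Fin n → ℝ)))
      (fun y => S.indicator (fun z => ENNReal.ofReal (phi n (z - C))) y) C
    rw [← this]
    congr 1 with A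
    simp only [Set.indicator_apply, Set.mem_preimage, add_sub_cancel_right]
  -- Cauchy-Schwarz bound for the shifted bad mass
  set bad : ℝ≥0∞ := ∫⁻ y in Sᶜ, ENNReal.ofReal (phi n (y - C)) with hbaddef
  have hphiC : Measurable fun y : Fin n → Fin n → ℝ => phi n (y - C) :=
    (phi_measurable n).comp (measurable_id.sub measurable_const)
  have hsqrt : Measurable fun y : Fin n → Fin n → ℝ => Real.sqrt (phi n y) :=
    Real.continuous_sqrt.measurable.comp (phi_measurable n)
  set f : (Fin n → Fin n → ℝ) → ℝ≥0∞ :=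
    Sᶜ.indicator (fun y => ENNReal.ofReal (Real.sqrt (phi n y))) with hfdef
  set gg : (Fin n → Fin n → ℝ) → ℝ≥0∞ :=
    fun y => ENNReal.ofReal (phi n (y - C) / Real.sqrt (phi n y)) with hggdef
  have hfm : Measurable f := (hsqrt.ennreal_ofReal).indicator hS.compl
  have hggm : Measurable gg := (hphiC.div hsqrt).ennreal_ofReal
  have hfg : ∀ y, f y * gg y
      = Sᶜ.indicator (fun y => ENNReal.ofReal (phi n (y - C))) y := by
    intro y
    by_cases hy : y ∈ Sᶜ
    · rw [hfdef, Set.indicator_of_mem hy, Set.indicator_of_mem hy, hggdef,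
        ← ENNReal.ofReal_mul (Real.sqrt_nonneg _)]
      congr 1
      rw [mul_comm, div_mul_cancel₀ _ (ne_of_gt (Real.sqrt_pos.mpr (phi_pos n y)))]
    · rw [hfdef, Set.indicator_of_notMem hy, Set.indicator_of_notMem hy, zero_mul]
  have hf2 : ∀ y, f y ^ (2:ℝ) = Sᶜ.indicator (fun y => ENNReal.ofReal (phi n y)) y := by
    intro y
    by_cases hy : y ∈ Sᶜ
    · rw [hfdef, Set.indicator_of_mem hy, Set.indicator_of_mem hy,
        ENNReal.ofReal_rpow_of_nonneg (Real.sqrt_nonneg _) (by norm_num : (0:ℝ) ≤ 2)]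
      congr 1
      rw [show (2:ℝ) = ((2:ℕ):ℝ) by norm_num, Real.rpow_natCast, Real.sq_sqrt (phi_pos n y).le]
    · rw [hfdef, Set.indicator_of_notMem hy, Set.indicator_of_notMem hy]
      rw [ENNReal.zero_rpow_of_pos (by norm_num : (0:ℝ) < 2)]
  have hg2 : ∀ y, gg y ^ (2:ℝ)
      = ENNReal.ofReal (Real.exp (∑ i, ∑ j, (C i j)^2) * phi n (y - (C + C))) := by
    intro y
    rw [hggdef, ENNReal.ofReal_rpow_of_nonneg
      (div_nonneg (phi_pos n _).le (Real.sqrt_nonneg _)) (by norm_num : (0:ℝ) ≤ 2)]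
    congr 1
    rw [show (2:ℝ) = ((2:ℕ):ℝ) by norm_num, Real.rpow_natCast, div_pow,
      Real.sq_sqrt (phi_pos n y).le]
    exact phi_div_identity n C y
  have hIf2 : ∫⁻ y, f y ^ (2:ℝ) ≤ ENNReal.ofReal δ := by
    calc ∫⁻ y, f y ^ (2:ℝ)
        = ∫⁻ y, Sᶜ.indicator (fun y => ENNReal.ofReal (phi n y)) y := by simp_rw [hf2]
      _ = ∫⁻ y in Sᶜ, ENNReal.ofReal (phi n y) := lintegral_indicator hS.compl _
      _ = μ Sᶜ := (happly _ hS.compl).symm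
      _ ≤ ENNReal.ofReal δ := hbadS
  have hIg2 : ∫⁻ y, gg y ^ (2:ℝ) = ENNReal.ofReal (Real.exp (∑ i, ∑ j, (C i j)^2)) := by
    simp_rw [hg2]
    rw [show (fun y => ENNReal.ofReal (Real.exp (∑ i, ∑ j, (C i j)^2) * phi n (y - (C + C))))
        = fun y => ENNReal.ofReal (Real.exp (∑ i, ∑ j, (C i j)^2)) *
          ENNReal.ofReal (phi n (y - (C + C))) from funext fun y =>
            ENNReal.ofReal_mul (Real.exp_pos _).le]
    have hphiCC : Measurable fun y : Fin n → Fin n → ℝ =>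
        ENNReal.ofReal (phi n (y - (C + C))) :=
      ((phi_measurable n).comp (measurable_id.sub measurable_const)).ennreal_ofReal
    rw [lintegral_const_mul _ hphiCC]
    rw [lintegral_phi_shift n (C + C), mul_one]
  have hbad : bad ≤ ENNReal.ofReal (K * Real.sqrt δ) := by
    have hCS := ENNReal.lintegral_mul_le_Lp_mul_Lq
      (volume : Measure (Fin n → Fin n → ℝ)) (p := 2) (q := 2)
      ⟨by norm_num, by norm_num, by norm_num⟩ hfm.aemeasurable hggm.aemeasurable
    have hbad' : bad = ∫⁻ y, f y * gg y := by
      rw [hbaddef, ← lintegral_indicator hS.compl _]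
      congr 1 with y
      rw [hfg]
    rw [hbad']
    calc ∫⁻ y, f y * gg y
        ≤ (∫⁻ y, f y ^ (2:ℝ)) ^ ((1:ℝ)/2) * (∫⁻ y, gg y ^ (2:ℝ)) ^ ((1:ℝ)/2) := hCS
      _ ≤ (ENNReal.ofReal δ) ^ ((1:ℝ)/2) *
          (ENNReal.ofReal (Real.exp (∑ i, ∑ j, (C i j)^2))) ^ ((1:ℝ)/2) := by
          exact mul_le_mul' (ENNReal.rpow_le_rpow hIf2 (by norm_num)) (le_of_eq (by rw [hIg2]))
      _ = ENNReal.ofReal (K * Real.sqrt δ) := by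
          rw [ENNReal.ofReal_rpow_of_nonneg hδ (by norm_num),
            ENNReal.ofReal_rpow_of_nonneg (Real.exp_pos _).le (by norm_num),
            ← ENNReal.ofReal_mul (by positivity)]
          congr 1
          rw [← Real.sqrt_eq_rpow, ← Real.exp_mul, mul_one_div, hKdef, mul_comm]
  -- conclusion
  have hbadfin : bad ≠ ⊤ := (hbad.trans_lt ENNReal.ofReal_lt_top).ne
  have hsplit : μ ((fun A => A + C) ⁻¹' S) + bad = 1 := by
    rw [hshift, hbaddef, lintegral_add_compl _ hS, lintegral_phi_shift]
  rw [htarget]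
  calc ENNReal.ofReal (1 - K * Real.sqrt δ)
      = 1 - ENNReal.ofReal (K * Real.sqrt δ) := by
        rw [ENNReal.ofReal_sub 1 hK0, ENNReal.ofReal_one]
    _ ≤ 1 - bad := tsub_le_tsub_left hbad 1
    _ ≤ μ ((fun A => A + C) ⁻¹' S) :=
        le_of_eq (by rw [← hsplit, ENNReal.add_sub_cancel_right hbadfin])
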